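/- Suppose φ : 𝔻 → 𝔻 is holomorphic with φ(0) = 0, and define S(z) = 2φ'(z)/(1 - zφ(z))². Then (1-|z|²)²|S(z)| ≤ 2 for all z ∈ 𝔻. -/

import Mathlib

open Metric

open Complex in
/-- Key algebraic identity for disk automorphisms. -/
lemma normSq_mobius_identity (a w : ℂ) :
    Complex.normSq (1 - (starRingEnd ℂ) a * w) - Complex.normSq (a - w) =
      (1 - Complex.normSq a) * (1 - Complex.normSq w) := by
  simp only [Complex.normSq_apply, Complex.sub_re, Complex.sub_im, Complex.mul_re,
    Complex.mul_im, Complex.one_re, Complex.one_im, Complex.conj_re, Complex.conj_im]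
  ring

lemma mobius_abs_lt_one {a w : ℂ} (ha : ‖a‖ < 1) (hw : ‖w‖ < 1) :
    ‖(a - w) / (1 - (starRingEnd ℂ) a * w)‖ < 1 := by
  have hkey := normSq_mobius_identity a w
  have ha2 : Complex.normSq a < 1 := by
    rw [← Complex.sq_norm]; nlinarith [norm_nonneg a]
  have hw2 : Complex.normSq w < 1 := by
    rw [← Complex.sq_norm]; nlinarith [norm_nonneg w]
  have hlt : Complex.normSq (a - w) < Complex.normSq (1 - (starRingEnd ℂ) a * w) := by
    nlinarith
  have hden : ‖a - w‖ < ‖1 - (starRingEnd ℂ) a * w‖ := by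
    rw [← Real.sqrt_sq (norm_nonneg (a - w)),
      ← Real.sqrt_sq (norm_nonneg (1 - (starRingEnd ℂ) a * w))]
    exact Real.sqrt_lt_sqrt (by positivity) (by rwa [Complex.sq_norm, Complex.sq_norm])
  rcases eq_or_lt_of_le (norm_nonneg (1 - (starRingEnd ℂ) a * w)) with h | h
  · exfalso; nlinarith [norm_nonneg (a - w)]
  · rw [norm_div, div_lt_one h]; exact hden

lemma mobius_denom_ne {a w : ℂ} (ha : ‖a‖ < 1) (hw : ‖w‖ < 1) :
    1 - (starRingEnd ℂ) a * w ≠ 0 := by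
  intro h
  have : ‖(starRingEnd ℂ) a * w‖ < 1 := by
    rw [norm_mul, Complex.norm_conj]
    nlinarith [norm_nonneg a, norm_nonneg w]
  have h1 : (1 : ℂ) = (starRingEnd ℂ) a * w := by linear_combination h
  rw [← h1] at this; simp at this

lemma mobius_hasDerivAt (a w : ℂ) (h : 1 - (starRingEnd ℂ) a * w ≠ 0) :
    HasDerivAt (fun x => (a - x) / (1 - (starRingEnd ℂ) a * x))
      (((starRingEnd ℂ) a * a - 1) / (1 - (starRingEnd ℂ) a * w) ^ 2) w := by
  have h1 : HasDerivAt (fun x : ℂ => a - x) (-1) w := by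
    simpa using (hasDerivAt_id w).const_sub a
  have h2 : HasDerivAt (fun x : ℂ => 1 - (starRingEnd ℂ) a * x) (-((starRingEnd ℂ) a)) w := by
    simpa using ((hasDerivAt_id w).const_mul ((starRingEnd ℂ) a)).const_sub 1
  have : HasDerivAt (fun x => (a - x) / (1 - (starRingEnd ℂ) a * x)) _ w := h1.div h2 h
  convert this using 1
  congr 1
  ring

/-- The Schwarz–Pick lemma. -/
lemma schwarz_pick {φ : ℂ → ℂ}
    (hd : DifferentiableOn ℂ φ (ball (0 : ℂ) 1))
    (hmaps : Set.MapsTo φ (ball (0 : ℂ) 1) (ball (0 : ℂ) 1))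
    {z : ℂ} (hz : z ∈ ball (0 : ℂ) 1) :
    ‖deriv φ z‖ * (1 - ‖z‖ ^ 2) ≤ 1 - ‖φ z‖ ^ 2 := by
  have hz1 : ‖z‖ < 1 := by simpa [mem_ball, dist_eq_norm] using hz
  set a := φ z with ha_def
  have ha1 : ‖a‖ < 1 := by
    have := hmaps hz; simpa [mem_ball, dist_eq_norm] using this
  set m : ℂ → ℂ := fun w => (a - w) / (1 - (starRingEnd ℂ) a * w) with hm_def
  set n : ℂ → ℂ := fun w => (z - w) / (1 - (starRingEnd ℂ) z * w) with hn_def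
  set F : ℂ → ℂ := fun w => m (φ (n w)) with hF_def
  -- n maps ball to ball, m maps ball to ball
  have hn_maps : Set.MapsTo n (ball (0 : ℂ) 1) (ball (0 : ℂ) 1) := fun w hw => by
    have hw1 : ‖w‖ < 1 := by simpa [mem_ball, dist_eq_norm] using hw
    simpa [mem_ball, dist_eq_norm, hn_def] using mobius_abs_lt_one hz1 hw1
  have hm_maps : Set.MapsTo m (ball (0 : ℂ) 1) (ball (0 : ℂ) 1) := fun w hw => by
    have hw1 : ‖w‖ < 1 := by simpa [mem_ball, dist_eq_norm] using hw
    simpa [mem_ball, dist_eq_norm, hm_def] using mobius_abs_lt_one ha1 hw1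
  have hn_diff : DifferentiableOn ℂ n (ball (0 : ℂ) 1) := fun w hw => by
    have hw1 : ‖w‖ < 1 := by simpa [mem_ball, dist_eq_norm] using hw
    exact ((mobius_hasDerivAt z w (mobius_denom_ne hz1 hw1)).differentiableAt).differentiableWithinAt
  have hm_diff : DifferentiableOn ℂ m (ball (0 : ℂ) 1) := fun w hw => by
    have hw1 : ‖w‖ < 1 := by simpa [mem_ball, dist_eq_norm] using hw
    exact ((mobius_hasDerivAt a w (mobius_denom_ne ha1 hw1)).differentiableAt).differentiableWithinAt
  have hF_diff : DifferentiableOn ℂ F (ball (0 : ℂ) 1) :=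
    hm_diff.comp (hd.comp hn_diff hn_maps) (hmaps.comp hn_maps)
  -- F 0 = 0
  have hn0 : n 0 = z := by simp [hn_def]
  have hF0 : F 0 = 0 := by simp [hF_def, hn0, hm_def, ← ha_def]
  -- derivative of F at 0
  have hsz : ((starRingEnd ℂ) z * z) = (Complex.normSq z : ℂ) := by
    rw [mul_comm, Complex.mul_conj]
  have hsa : ((starRingEnd ℂ) a * a) = (Complex.normSq a : ℂ) := by
    rw [mul_comm, Complex.mul_conj]
  have hna : HasDerivAt n ((Complex.normSq z : ℂ) - 1) 0 := by
    have := mobius_hasDerivAt z 0 (by simp)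
    simpa [hsz] using this
  have hφz : HasDerivAt φ (deriv φ z) z :=
    (hd.differentiableAt (isOpen_ball.mem_nhds hz)).hasDerivAt
  have hma : HasDerivAt m (-1 / (1 - (Complex.normSq a : ℂ))) a := by
    have hden : 1 - (starRingEnd ℂ) a * a ≠ 0 := mobius_denom_ne ha1 ha1
    have := mobius_hasDerivAt a a hden
    have hne : (1 : ℂ) - (Complex.normSq a : ℂ) ≠ 0 := by rwa [← hsa]
    have heq : ((starRingEnd ℂ) a * a - 1) / (1 - (starRingEnd ℂ) a * a) ^ 2
        = -1 / (1 - (Complex.normSq a : ℂ)) := by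
      rw [hsa]
      field_simp
      ring
    rwa [heq] at this
  have hF' : HasDerivAt F (-1 / (1 - (Complex.normSq a : ℂ)) *
      (deriv φ z * ((Complex.normSq z : ℂ) - 1))) 0 := by
    have h1 : HasDerivAt (φ ∘ n) (deriv φ z * ((Complex.normSq z : ℂ) - 1)) 0 := by
      have := HasDerivAt.comp 0 (hn0 ▸ hφz) hna
      simpa [hn0] using this
    have h2 := HasDerivAt.comp 0 (by rw [Function.comp_apply, hn0, ← ha_def]; exact hma) h1
    exact h2
  -- Schwarz lemma for F
  have hbound : ‖deriv F 0‖ ≤ 1 := by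
    refine Complex.norm_deriv_le_one_of_mapsTo_ball hF_diff ?_ one_pos
    rw [hF0]; exact (hm_maps.comp (hmaps.comp hn_maps)).mono_right ball_subset_closedBall
  rw [hF'.deriv] at hbound
  have hsa1 : Complex.normSq a < 1 := by
    rw [← Complex.sq_norm]; nlinarith [norm_nonneg a]
  have habs : ‖-1 / (1 - (Complex.normSq a : ℂ)) *
      (deriv φ z * ((Complex.normSq z : ℂ) - 1))‖
      = ‖deriv φ z‖ * (1 - Complex.normSq z) / (1 - Complex.normSq a) := by
    have h1 : ‖-1 / (1 - (Complex.normSq a : ℂ))‖ = 1 / (1 - Complex.normSq a) := by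
      rw [norm_div]
      simp only [norm_neg, norm_one]
      congr 1
      rw [show (1 : ℂ) - (Complex.normSq a : ℂ) = ((1 - Complex.normSq a : ℝ) : ℂ) by push_cast; ring,
        Complex.norm_real, Real.norm_eq_abs, abs_of_pos (by linarith)]
    have hsz1 : Complex.normSq z < 1 := by
      rw [← Complex.sq_norm]; nlinarith [norm_nonneg z]
    have h2 : ‖(Complex.normSq z : ℂ) - 1‖ = 1 - Complex.normSq z := by
      rw [show (Complex.normSq z : ℂ) - 1 = ((Complex.normSq z - 1 : ℝ) : ℂ) by push_cast; ring,
        Complex.norm_real, Real.norm_eq_abs, abs_of_neg (by linarith)]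
      ring
    rw [norm_mul, norm_mul, h1, h2]
    ring
  rw [habs] at hbound
  rw [div_le_one (by linarith)] at hbound
  calc ‖deriv φ z‖ * (1 - ‖z‖ ^ 2)
      = ‖deriv φ z‖ * (1 - Complex.normSq z) := by rw [Complex.sq_norm]
    _ ≤ 1 - Complex.normSq a := hbound
    _ = 1 - ‖φ z‖ ^ 2 := by rw [Complex.sq_norm, ha_def]

theorem stmt15 (φ : ℂ → ℂ)
    (hd : DifferentiableOn ℂ φ (ball (0 : ℂ) 1))
    (hmaps : Set.MapsTo φ (ball (0 : ℂ) 1) (ball (0 : ℂ) 1))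
    (h0 : φ 0 = 0) :
    ∀ z ∈ ball (0 : ℂ) 1,
      (1 - ‖z‖ ^ 2) ^ 2 *
          ‖2 * deriv φ z / (1 - z * φ z) ^ 2‖ ≤ 2 := by
  intro z hz
  have hz1 : ‖z‖ < 1 := by simpa [mem_ball, dist_eq_norm] using hz
  have hφ1 : ‖φ z‖ < 1 := by
    have := hmaps hz; simpa [mem_ball, dist_eq_norm] using this
  have hφle : ‖φ z‖ ≤ ‖z‖ :=
    Complex.norm_le_norm_of_mapsTo_ball hd (hmaps.mono_right ball_subset_closedBall) h0 hz1
  set r := ‖z‖ with hr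
  set b := ‖φ z‖ with hb
  have hr0 : 0 ≤ r := norm_nonneg z
  have hb0 : 0 ≤ b := norm_nonneg (φ z)
  have hpick := schwarz_pick hd hmaps hz
  -- lower bound on |1 - z φ z|
  have habs_den : 1 - r * b ≤ ‖1 - z * φ z‖ := by
    have h1 : ‖z * φ z‖ = r * b := by rw [norm_mul]
    have h2 := norm_sub_norm_le (1 : ℂ) (z * φ z)
    simp only [norm_one, norm_mul] at h2
    linarith
  have hrb : 0 < 1 - r * b := by nlinarith
  have hden_pos : 0 < ‖1 - z * φ z‖ := lt_of_lt_of_le hrb habs_den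
  rw [norm_div, norm_mul, norm_pow]
  have h2 : ‖(2 : ℂ)‖ = 2 := by norm_num
  rw [h2]
  rw [show (1 - r ^ 2) ^ 2 * (2 * ‖deriv φ z‖ / ‖1 - z * φ z‖ ^ 2)
      = (1 - r ^ 2) ^ 2 * (2 * ‖deriv φ z‖) / ‖1 - z * φ z‖ ^ 2 by ring,
    div_le_iff₀ (by positivity)]
  have key : (1 - r ^ 2) ^ 2 * ‖deriv φ z‖ ≤ (1 - r * b) ^ 2 := by
    have h3 : (1 - r ^ 2) * (‖deriv φ z‖ * (1 - r ^ 2))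
        ≤ (1 - r ^ 2) * (1 - b ^ 2) := by
      apply mul_le_mul_of_nonneg_left hpick
      nlinarith
    nlinarith
  have hsq : (1 - r * b) ^ 2 ≤ ‖1 - z * φ z‖ ^ 2 := by
    apply pow_le_pow_left₀ hrb.le habs_den
  nlinarith
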